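/- Let λ₁,...,λ₄ be positive coprime integers associated with a Fano tetrahedron, h = Σλᵢ. Then gcd(λᵢ, h) = 1 for each i = 1,...,4. -/

import Mathlib

/-- The real vector corresponding to a lattice point of `ℤ³`. -/
noncomputable def toR (x : Fin 3 → ℤ) : Fin 3 → ℝ := fun i => (x i : ℝ)

/-- A lattice tetrahedron in `ℤ³` is *Fano* if its vertices are affinely independent
lattice points, and the only lattice point it contains other than its vertices is the
origin, which lies strictly in its interior. -/
def IsFanoTetra (x : Fin 4 → Fin 3 → ℤ) : Prop :=
  AffineIndependent ℝ (fun i => toR (x i)) ∧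
  (0 : Fin 3 → ℝ) ∈ interior (convexHull ℝ (Set.range fun i => toR (x i))) ∧
  ∀ p : Fin 3 → ℤ, toR p ∈ convexHull ℝ (Set.range fun i => toR (x i)) →
    p = 0 ∨ ∃ i, p = x i

lemma fano_aux (x : Fin 4 → Fin 3 → ℤ)
    (hind : AffineIndependent ℝ (fun i => toR (x i)))
    (honly : ∀ p : Fin 3 → ℤ, toR p ∈ convexHull ℝ (Set.range fun i => toR (x i)) →
      p = 0 ∨ ∃ i, p = x i)
    (l : Fin 4 → ℤ) (hpos : ∀ i, 0 < l i)
    (hbary : (∑ i, l i • x i) = 0)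
    (q : ℕ) (hq : q.Prime)
    (hq0 : (q : ℤ) ∣ l 0)
    (hqh : (q : ℤ) ∣ ∑ t, l t)
    (hnot : ¬ ∀ t, (q : ℤ) ∣ l t) : False := by
  set Q : ℤ := (q : ℤ) with hQdef
  have hQ : 0 < Q := Int.natCast_pos.mpr hq.pos
  have hQne : Q ≠ 0 := ne_of_gt hQ
  -- componentwise form of the barycentric relation
  have hb : ∀ c, l 0 * x 0 c + l 1 * x 1 c + l 2 * x 2 c + l 3 * x 3 c = 0 := by
    intro c
    have h1 := congrFun hbary c
    simpa [Fin.sum_univ_four] using h1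
  have hq123 : Q ∣ l 1 + l 2 + l 3 := by
    have h2 : (∑ t, l t) - l 0 = l 1 + l 2 + l 3 := by
      simp [Fin.sum_univ_four]; ring
    have := dvd_sub hqh hq0
    rwa [h2] at this
  -- residues of l 1, l 2, l 3 mod Q
  set a₁ : ℤ := l 1 % Q with ha₁def
  set a₂ : ℤ := l 2 % Q with ha₂def
  set a₃ : ℤ := l 3 % Q with ha₃def
  have h10 : 0 ≤ a₁ := Int.emod_nonneg _ hQne
  have h20 : 0 ≤ a₂ := Int.emod_nonneg _ hQne
  have h30 : 0 ≤ a₃ := Int.emod_nonneg _ hQne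
  have h1Q : a₁ < Q := Int.emod_lt_of_pos _ hQ
  have h2Q : a₂ < Q := Int.emod_lt_of_pos _ hQ
  have h3Q : a₃ < Q := Int.emod_lt_of_pos _ hQ
  have hd1 : Q ∣ l 1 - a₁ := ⟨l 1 / Q, by have := Int.emod_add_mul_ediv (l 1) Q; linarith⟩
  have hd2 : Q ∣ l 2 - a₂ := ⟨l 2 / Q, by have := Int.emod_add_mul_ediv (l 2) Q; linarith⟩
  have hd3 : Q ∣ l 3 - a₃ := ⟨l 3 / Q, by have := Int.emod_add_mul_ediv (l 3) Q; linarith⟩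
  -- divisibility of the residue-weighted sums of vertices
  have hdvd_abc : ∀ c, Q ∣ a₁ * x 1 c + a₂ * x 2 c + a₃ * x 3 c := by
    intro c
    have base : Q ∣ l 1 * x 1 c + l 2 * x 2 c + l 3 * x 3 c := by
      have h3 : l 1 * x 1 c + l 2 * x 2 c + l 3 * x 3 c = -(l 0 * x 0 c) := by
        have := hb c; linarith
      rw [h3]
      exact dvd_neg.mpr (hq0.mul_right _)
    have h4 : Q ∣ (l 1 - a₁) * x 1 c + (l 2 - a₂) * x 2 c + (l 3 - a₃) * x 3 c :=
      dvd_add (dvd_add (hd1.mul_right _) (hd2.mul_right _)) (hd3.mul_right _)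
    have h5 : a₁ * x 1 c + a₂ * x 2 c + a₃ * x 3 c =
        (l 1 * x 1 c + l 2 * x 2 c + l 3 * x 3 c) -
        ((l 1 - a₁) * x 1 c + (l 2 - a₂) * x 2 c + (l 3 - a₃) * x 3 c) := by ring
    rw [h5]
    exact dvd_sub base h4
  have hdabc : Q ∣ a₁ + a₂ + a₃ := by
    have h6 : Q ∣ (l 1 - a₁) + (l 2 - a₂) + (l 3 - a₃) :=
      dvd_add (dvd_add hd1 hd2) hd3
    have h7 : a₁ + a₂ + a₃ = (l 1 + l 2 + l 3) - ((l 1 - a₁) + (l 2 - a₂) + (l 3 - a₃)) := by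
      ring
    rw [h7]
    exact dvd_sub hq123 h6
  have hne0 : a₁ + a₂ + a₃ ≠ 0 := by
    intro h0
    apply hnot
    have e1 : a₁ = 0 := by omega
    have e2 : a₂ = 0 := by omega
    have e3 : a₃ = 0 := by omega
    intro t
    fin_cases t
    · exact hq0
    · have := hd1; rw [e1, sub_zero] at this; exact this
    · have := hd2; rw [e2, sub_zero] at this; exact this
    · have := hd3; rw [e3, sub_zero] at this; exact this
  obtain ⟨n, hn⟩ := hdabc
  have hn12 : n = 1 ∨ n = 2 := by
    have hp : 0 < a₁ + a₂ + a₃ := lt_of_le_of_ne (by linarith) (Ne.symm hne0)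
    have hlt : a₁ + a₂ + a₃ < 3 * Q := by linarith
    have hn1 : 1 ≤ n := by nlinarith
    have hn2 : n ≤ 2 := by nlinarith
    omega
  -- the three coefficients α β γ
  have key : ∃ α β γ : ℤ, 0 ≤ α ∧ α < Q ∧ 0 ≤ β ∧ β < Q ∧ 0 ≤ γ ∧ γ < Q ∧
      α + β + γ = Q ∧ ∀ c, Q ∣ α * x 1 c + β * x 2 c + γ * x 3 c := by
    rcases hn12 with h1 | h2
    · subst h1
      refine ⟨a₁, a₂, a₃, h10, h1Q, h20, h2Q, h30, h3Q, by omega, hdvd_abc⟩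
    · subst h2
      refine ⟨Q - a₁, Q - a₂, Q - a₃, by omega, by omega, by omega, by omega,
        by omega, by omega, by omega, ?_⟩
      intro c
      have h8 : (Q - a₁) * x 1 c + (Q - a₂) * x 2 c + (Q - a₃) * x 3 c =
          Q * (x 1 c + x 2 c + x 3 c) - (a₁ * x 1 c + a₂ * x 2 c + a₃ * x 3 c) := by ring
      rw [h8]
      exact dvd_sub (dvd_mul_right _ _) (hdvd_abc c)
  obtain ⟨α, β, γ, hα0, hαQ, hβ0, hβQ, hγ0, hγQ, hsumQ, hdvd⟩ := key
  -- the extra lattice point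
  set z : Fin 3 → ℤ := fun c => (α * x 1 c + β * x 2 c + γ * x 3 c) / Q with hzdef
  have hz : ∀ c, Q * z c = α * x 1 c + β * x 2 c + γ * x 3 c := fun c =>
    Int.mul_ediv_cancel' (hdvd c)
  have hQR : (Q : ℝ) ≠ 0 := by exact_mod_cast hQne
  have hQRpos : (0:ℝ) < (Q : ℝ) := by exact_mod_cast hQ
  set w : Fin 4 → ℝ := ![0, (α : ℝ) / (Q:ℝ), (β : ℝ) / (Q:ℝ), (γ : ℝ) / (Q:ℝ)] with hwdef
  have hsumR : (α : ℝ) + β + γ = (Q : ℝ) := by exact_mod_cast hsumQ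
  have hwsum : ∑ t, w t = 1 := by
    simp only [hwdef, Fin.sum_univ_four, Matrix.cons_val_zero, Matrix.cons_val_one,
      Matrix.head_cons, Matrix.cons_val_two, Matrix.tail_cons, Matrix.cons_val_three]
    field_simp
    linarith
  have hwz : toR z = ∑ t, w t • toR (x t) := by
    funext c
    have hzR : (Q : ℝ) * (z c : ℝ) = (α:ℝ) * (x 1 c : ℝ) + (β:ℝ) * (x 2 c : ℝ)
        + (γ:ℝ) * (x 3 c : ℝ) := by exact_mod_cast hz c
    simp only [toR, Finset.sum_apply, Pi.smul_apply, Fin.sum_univ_four, hwdef,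
      Matrix.cons_val_zero, Matrix.cons_val_one, Matrix.head_cons, Matrix.cons_val_two,
      Matrix.tail_cons, Matrix.cons_val_three, smul_eq_mul]
    field_simp
    linarith
  have hmem : toR z ∈ convexHull ℝ (Set.range fun i => toR (x i)) := by
    rw [hwz]
    refine (convex_convexHull ℝ _).sum_mem ?_ hwsum ?_
    · intro t _
      fin_cases t
      · simp [hwdef]
      · simp only [hwdef]
        exact div_nonneg (by exact_mod_cast hα0) (le_of_lt hQRpos)
      · simp only [hwdef]
        exact div_nonneg (by exact_mod_cast hβ0) (le_of_lt hQRpos)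
      · simp only [hwdef]
        exact div_nonneg (by exact_mod_cast hγ0) (le_of_lt hQRpos)
    · intro t _
      exact subset_convexHull ℝ _ ⟨t, rfl⟩
  have haff : ∀ w' : Fin 4 → ℝ, ∑ t, w' t = 0 →
      ∑ t, w' t • toR (x t) = 0 → ∀ t, w' t = 0 := by
    intro w' hs1 hs2 t
    exact affineIndependent_iff.mp hind Finset.univ w' hs1 hs2 t (Finset.mem_univ t)
  rcases honly z hmem with hz0 | ⟨t, hzt⟩
  · -- the extra point is the origin: impossible since it lies on a facet
    have h0 : ∑ t, w t • toR (x t) = 0 := by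
      rw [← hwz, hz0]
      funext c
      simp [toR]
    have hbR : ∑ t, ((l t : ℝ)) • toR (x t) = 0 := by
      funext c
      have hbc : ((l 0 : ℝ)) * (x 0 c : ℝ) + (l 1:ℝ) * (x 1 c:ℝ) + (l 2:ℝ) * (x 2 c:ℝ)
          + (l 3:ℝ) * (x 3 c:ℝ) = 0 := by exact_mod_cast hb c
      simp only [toR, Finset.sum_apply, Pi.smul_apply, Fin.sum_univ_four, smul_eq_mul,
        Pi.zero_apply]
      linarith
    set Hr : ℝ := (l 0 : ℝ) + (l 1:ℝ) + (l 2:ℝ) + (l 3:ℝ) with hHr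
    have hkey := haff (fun t => Hr * w t - (l t : ℝ)) ?_ ?_ 0
    · have hw0 : w 0 = 0 := by simp [hwdef]
      rw [hw0] at hkey
      simp only [mul_zero, zero_sub, neg_eq_zero] at hkey
      have := hpos 0
      have : (0:ℝ) < (l 0 : ℝ) := by exact_mod_cast this
      linarith
    · have : ∑ t, (Hr * w t - (l t : ℝ)) = Hr * (∑ t, w t) - ∑ t, (l t : ℝ) := by
        rw [Finset.mul_sum, ← Finset.sum_sub_distrib]
      rw [this, hwsum, mul_one, Fin.sum_univ_four, hHr]
      ring
    · have : ∑ t, (Hr * w t - (l t : ℝ)) • toR (x t) =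
          Hr • (∑ t, w t • toR (x t)) - ∑ t, ((l t : ℝ)) • toR (x t) := by
        rw [Finset.smul_sum, ← Finset.sum_sub_distrib]
        congr 1
        funext t
        rw [sub_smul, smul_smul]
      rw [this, h0, hbR, smul_zero, sub_zero]
  · -- the extra point is a vertex: impossible since its barycentric coords are < 1
    have hx0 : ∑ s, w s • toR (x s) = toR (x t) := by rw [← hwz, hzt]
    have hdelta : ∑ s, (if s = t then (1:ℝ) else 0) • toR (x s) = toR (x t) := by
      simp [ite_smul]
    have hkey := haff (fun s => w s - if s = t then 1 else 0) ?_ ?_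
    · have hwt : w t = 1 := by
        have h9 := hkey t
        simp only [if_pos rfl, if_true] at h9
        linarith
      fin_cases t
      · have hwt' : (0:ℝ) = 1 := hwt
        norm_num at hwt'
      · have hwt' : (α:ℝ) / (Q:ℝ) = 1 := hwt
        rw [div_eq_one_iff_eq hQR] at hwt'
        have : α = Q := by exact_mod_cast hwt'
        omega
      · have hwt' : (β:ℝ) / (Q:ℝ) = 1 := hwt
        rw [div_eq_one_iff_eq hQR] at hwt'
        have : β = Q := by exact_mod_cast hwt'
        omega
      · have hwt' : (γ:ℝ) / (Q:ℝ) = 1 := hwt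
        rw [div_eq_one_iff_eq hQR] at hwt'
        have : γ = Q := by exact_mod_cast hwt'
        omega
    · have : ∑ s, (w s - if s = t then (1:ℝ) else 0) =
          (∑ s, w s) - ∑ s, (if s = t then (1:ℝ) else 0) := by
        rw [← Finset.sum_sub_distrib]
      rw [this, hwsum]
      simp
    · have : ∑ s, (w s - if s = t then (1:ℝ) else 0) • toR (x s) =
          (∑ s, w s • toR (x s)) - ∑ s, (if s = t then (1:ℝ) else 0) • toR (x s) := by
        rw [← Finset.sum_sub_distrib]
        congr 1
        funext s
        rw [sub_smul]
      rw [this, hx0, hdelta, sub_self]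

theorem fanoTetra_weights_coprime_to_sum
    (x : Fin 4 → Fin 3 → ℤ) (hx : IsFanoTetra x)
    (l : Fin 4 → ℤ) (hpos : ∀ i, 0 < l i)
    (hgcd : Int.gcd (Int.gcd (Int.gcd (l 0) (l 1)) (l 2)) (l 3) = 1)
    (hbary : (∑ i, l i • x i) = 0)
    (h : ℤ) (hh : h = l 0 + l 1 + l 2 + l 3) :
    ∀ i, Int.gcd (l i) h = 1 := by
  obtain ⟨hind, hint, honly⟩ := hx
  intro i
  by_contra hne
  set g := Int.gcd (l i) h with hgdef
  set q := g.minFac with hqdef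
  have hq : q.Prime := Nat.minFac_prime hne
  have hqg : (q:ℤ) ∣ (g:ℤ) := Int.natCast_dvd_natCast.mpr (Nat.minFac_dvd g)
  have hqi : (q:ℤ) ∣ l i := hqg.trans (Int.gcd_dvd_left (l i) h)
  have hqh : (q:ℤ) ∣ h := hqg.trans (Int.gcd_dvd_right (l i) h)
  have hnot : ¬ ∀ t, (q:ℤ) ∣ l t := by
    intro hall
    have h01 : (q:ℤ) ∣ ((Int.gcd (l 0) (l 1) : ℕ) : ℤ) := Int.dvd_coe_gcd (hall 0) (hall 1)
    have h012 : (q:ℤ) ∣ ((Int.gcd (Int.gcd (l 0) (l 1)) (l 2) : ℕ) : ℤ) :=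
      Int.dvd_coe_gcd h01 (hall 2)
    have h0123 : (q:ℤ) ∣ ((Int.gcd (Int.gcd (Int.gcd (l 0) (l 1)) (l 2)) (l 3) : ℕ) : ℤ) :=
      Int.dvd_coe_gcd h012 (hall 3)
    rw [hgcd] at h0123
    have hq1 : q ∣ 1 := by exact_mod_cast h0123
    exact hq.one_lt.ne' (Nat.dvd_one.mp hq1)
  set σ : Equiv.Perm (Fin 4) := Equiv.swap 0 i with hσdef
  have hsum_comp : ∑ t, l (σ t) = ∑ t, l t := Equiv.sum_comp σ l
  have hsum_l : ∑ t, l t = h := by rw [hh, Fin.sum_univ_four]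
  apply fano_aux (fun t => x (σ t)) ?_ ?_ (fun t => l (σ t)) (fun t => hpos _) ?_ q hq ?_ ?_ ?_
  · exact AffineIndependent.comp_embedding σ.toEmbedding hind
  · intro p hp
    have hrange : Set.range (fun t => toR (x (σ t))) = Set.range (fun i => toR (x i)) :=
      Function.Surjective.range_comp σ.surjective (fun i => toR (x i))
    rcases honly p (by rwa [hrange] at hp) with h0 | ⟨j, hj⟩
    · exact Or.inl h0
    · exact Or.inr ⟨σ.symm j, by rw [hj]; simp⟩
  · have := Equiv.sum_comp σ (fun t => l t • x t)
    rw [← this] at hbary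
    exact hbary
  · have hs0 : σ 0 = i := Equiv.swap_apply_left 0 i
    simpa [hs0] using hqi
  · rw [hsum_comp, hsum_l]
    exact hqh
  · intro hall
    apply hnot
    intro t
    have := hall (σ.symm t)
    simpa using this
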